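/- Let F = f + g with f convex L-smooth and g proper convex lsc, with F_* = min F attained on Ω_*. Suppose F satisfies the HEB with θ ∈ (0, 1/2] on the ξ-sublevel set: dist(x, Ω_*) ≤ c(F(x) − F_*)^θ for x ∈ S_ξ. Then for all x ∈ S_ξ, dist(x, Ω_*) ≤ (2/L)‖G(x)‖ + c^{1/(1−θ)} 2^{θ/(1−θ)} ‖G(x)‖^{θ/(1−θ)}, where G(x) = L(x − prox_{g/L}(x − ∇f(x)/L)). -/

import Mathlib

open Set Metric

section Helpers

variable {E : Type*} [NormedAddCommGroup E] [InnerProductSpace ℝ E] [CompleteSpace E]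

private lemma line_hasDerivAt_aux (f : E → ℝ) (f' : E → E)
    (hgrad : ∀ p, HasGradientAt f (f' p) p) (x u : E) (t : ℝ) :
    HasDerivAt (fun s : ℝ => f (x + s • u)) (inner ℝ (f' (x + t • u)) u : ℝ) t := by
  have h1 : HasDerivAt (fun s : ℝ => x + s • u) u t := by
    simpa using ((hasDerivAt_id t).smul_const u).const_add x
  have h2 : HasFDerivAt f (InnerProductSpace.toDual ℝ E (f' (x + t • u))) (x + t • u) :=
    (hasGradientAt_iff_hasFDerivAt).1 (hgrad _)
  exact h2.comp_hasDerivAt t h1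

private lemma convex_grad_ineq_aux (f : E → ℝ) (f' : E → E) (hconv : ConvexOn ℝ Set.univ f)
    (hgrad : ∀ p, HasGradientAt f (f' p) p) (x y : E) :
    f x + inner ℝ (f' x) (y - x) ≤ f y := by
  set u := y - x with hu
  have hφ : ConvexOn ℝ Set.univ (fun s : ℝ => f (x + s • u)) := by
    refine ⟨convex_univ, ?_⟩
    intro s₁ _ s₂ _ a b ha hb hab
    have key : a • (x + s₁ • u) + b • (x + s₂ • u) = (a + b) • x + (a * s₁ + b * s₂) • u := by
      module
    rw [hab, one_smul] at key
    simp only [smul_eq_mul, ← key]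
    exact hconv.2 (mem_univ _) (mem_univ _) ha hb hab
  have hd := line_hasDerivAt_aux f f' hgrad x u 0
  have hs := hφ.le_slope_of_hasDerivAt (mem_univ (0:ℝ)) (mem_univ (1:ℝ)) one_pos
    (by simpa using hd)
  rw [slope_def_field] at hs
  have h1 : x + (1:ℝ) • u = y := by rw [one_smul, hu]; abel
  simp only [h1, zero_smul, add_zero] at hs
  have : (inner ℝ (f' x) u : ℝ) ≤ f y - f x := by
    calc (inner ℝ (f' x) u : ℝ) ≤ (f y - f x) / (1 - 0) := by simpa [div_sub_div_same] using hs
    _ = f y - f x := by norm_num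
  linarith

private lemma descent_lemma_aux (L : ℝ) (f : E → ℝ) (f' : E → E)
    (hgrad : ∀ p, HasGradientAt f (f' p) p)
    (hlip : ∀ x y, ‖f' x - f' y‖ ≤ L * ‖x - y‖) (x y : E) :
    f y ≤ f x + inner ℝ (f' x) (y - x) + L / 2 * ‖y - x‖ ^ 2 := by
  set u := y - x with hu
  set ψ : ℝ → ℝ := fun t => f (x + t • u) - t * inner ℝ (f' x) u - L * ‖u‖ ^ 2 * t ^ 2 / 2
    with hψ
  have hψd : ∀ t : ℝ, HasDerivAt ψ
      ((inner ℝ (f' (x + t • u)) u : ℝ) - inner ℝ (f' x) u - L * ‖u‖ ^ 2 * t) t := by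
    intro t
    have h1 := line_hasDerivAt_aux f f' hgrad x u t
    have h2 : HasDerivAt (fun s : ℝ => s * (inner ℝ (f' x) u : ℝ)) (inner ℝ (f' x) u : ℝ) t := by
      simpa using (hasDerivAt_id t).mul_const (inner ℝ (f' x) u : ℝ)
    have h3 : HasDerivAt (fun s : ℝ => L * ‖u‖ ^ 2 * s ^ 2 / 2) (L * ‖u‖ ^ 2 * t) t := by
      have := ((hasDerivAt_pow 2 t).const_mul (L * ‖u‖ ^ 2)).div_const 2
      rw [show L * ‖u‖ ^ 2 * t = L * ‖u‖ ^ 2 * (((2:ℕ):ℝ) * t ^ 1) / 2 by push_cast; ring]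
      exact this
    exact (h1.sub h2).sub h3
  have hanti : AntitoneOn ψ (Icc 0 1) := by
    apply antitoneOn_of_deriv_nonpos (convex_Icc 0 1)
    · exact fun t _ => ((hψd t).differentiableAt).continuousAt.continuousWithinAt
    · exact fun t _ => ((hψd t).differentiableAt).differentiableWithinAt
    · intro t ht
      rw [interior_Icc, mem_Ioo] at ht
      rw [(hψd t).deriv]
      have e1 : (inner ℝ (f' (x + t • u)) u : ℝ) - inner ℝ (f' x) u
          = inner ℝ (f' (x + t • u) - f' x) u := by rw [inner_sub_left]
      have e2 : (inner ℝ (f' (x + t • u) - f' x) u : ℝ) ≤ ‖f' (x + t • u) - f' x‖ * ‖u‖ :=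
        real_inner_le_norm _ _
      have e3 : ‖f' (x + t • u) - f' x‖ ≤ L * ‖t • u‖ := by
        simpa using hlip (x + t • u) x
      have e4 : ‖t • u‖ = t * ‖u‖ := by
        rw [norm_smul, Real.norm_eq_abs, abs_of_pos ht.1]
      have hun : 0 ≤ ‖u‖ := norm_nonneg u
      have e5 : ‖f' (x + t • u) - f' x‖ * ‖u‖ ≤ L * (t * ‖u‖) * ‖u‖ := by
        rw [← e4]; exact mul_le_mul_of_nonneg_right e3 hun
      have e6 : L * (t * ‖u‖) * ‖u‖ = L * ‖u‖ ^ 2 * t := by ring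
      linarith [e1, e2, e5]
  have h01 := hanti (left_mem_Icc.2 zero_le_one) (right_mem_Icc.2 zero_le_one) zero_le_one
  have h1 : x + (1:ℝ) • u = y := by rw [one_smul, hu]; abel
  simp only [hψ, h1, zero_smul, add_zero] at h01
  simp only [one_pow, mul_one, zero_mul, zero_pow, mul_zero, zero_div, sub_zero] at h01
  linarith [h01]

private lemma prox_subgrad_aux (L : ℝ) (hL : 0 < L) (g : E → ℝ)
    (hconvg : ConvexOn ℝ Set.univ g) (v p : E)
    (hT : ∀ z, 1 / 2 * ‖p - v‖ ^ 2 + (1 / L) * g p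
        ≤ 1 / 2 * ‖z - v‖ ^ 2 + (1 / L) * g z) (z : E) :
    g p - g z ≤ inner ℝ (L • (v - p)) (p - z) := by
  set a := p - v with ha
  set b := z - p with hb
  have key : ∀ t : ℝ, t ∈ Set.Ioc (0:ℝ) 1 →
      (1 / L) * (g p - g z) ≤ inner ℝ a b + t / 2 * ‖b‖ ^ 2 := by
    intro t ht
    have hw : p + t • b = (1 - t) • p + t • z := by rw [hb]; module
    have hgw : g (p + t • b) ≤ (1 - t) * g p + t * g z := by
      rw [hw]
      exact hconvg.2 (mem_univ _) (mem_univ _) (by linarith [ht.2]) (le_of_lt ht.1) (by ring)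
    have hTw := hT (p + t • b)
    have hnorm : ‖p + t • b - v‖ ^ 2 = ‖a‖ ^ 2 + 2 * (t * inner ℝ a b) + t ^ 2 * ‖b‖ ^ 2 := by
      have : p + t • b - v = a + t • b := by rw [ha]; abel
      rw [this, norm_add_sq_real, real_inner_smul_right, norm_smul, Real.norm_eq_abs,
        abs_of_pos ht.1, mul_pow]
    rw [hnorm] at hTw
    have hL' : 0 < 1 / L := by positivity
    have step : (1 / L) * (g p - g (p + t • b)) ≤ t * inner ℝ a b + t ^ 2 / 2 * ‖b‖ ^ 2 := by
      nlinarith [hTw]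
    have step2 : (1 / L) * (g p - ((1 - t) * g p + t * g z))
        ≤ t * inner ℝ a b + t ^ 2 / 2 * ‖b‖ ^ 2 := by
      have := mul_le_mul_of_nonneg_left (sub_le_sub_left hgw (g p)) (le_of_lt hL')
      linarith [step, this]
    have step3 : t * ((1 / L) * (g p - g z)) ≤ t * (inner ℝ a b + t / 2 * ‖b‖ ^ 2) := by
      calc t * ((1 / L) * (g p - g z)) = (1 / L) * (g p - ((1 - t) * g p + t * g z)) := by ring
      _ ≤ t * inner ℝ a b + t ^ 2 / 2 * ‖b‖ ^ 2 := step2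
      _ = t * (inner ℝ a b + t / 2 * ‖b‖ ^ 2) := by ring
    exact le_of_mul_le_mul_left step3 ht.1
  have lim : (1 / L) * (g p - g z) ≤ inner ℝ a b := by
    by_contra hcon
    push_neg at hcon
    set A := (1 / L) * (g p - g z)
    set B := (inner ℝ a b : ℝ)
    set C := ‖b‖ ^ 2 / 2 with hC
    have hC0 : 0 ≤ C := by positivity
    set t : ℝ := min 1 ((A - B) / (2 * (C + 1))) with htdef
    have hAB : 0 < A - B := by linarith
    have ht0 : 0 < t := lt_min one_pos (by positivity)
    have ht1 : t ≤ 1 := min_le_left _ _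
    have hk := key t ⟨ht0, ht1⟩
    have htle : t ≤ (A - B) / (2 * (C + 1)) := min_le_right _ _
    have h2 : t * C ≤ (A - B) / (2 * (C + 1)) * C :=
      mul_le_mul_of_nonneg_right htle hC0
    have h3 : (A - B) / (2 * (C + 1)) * C < A - B := by
      rw [div_mul_eq_mul_div, div_lt_iff₀ (by positivity)]
      nlinarith
    have : t / 2 * ‖b‖ ^ 2 = t * C := by rw [hC]; ring
    rw [this] at hk
    linarith
  have hmul : g p - g z ≤ L * inner ℝ a b := by
    have := mul_le_mul_of_nonneg_left lim (le_of_lt hL)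
    rw [← mul_assoc] at this
    field_simp at this
    linarith [this]
  calc g p - g z ≤ L * inner ℝ a b := hmul
  _ = inner ℝ (L • (v - p)) (p - z) := by
      rw [real_inner_smul_left, ha, hb]
      rw [show (v - p : E) = -(p - v) by abel, show (p - z : E) = -(z - p) by abel,
        inner_neg_neg]

end Helpers


theorem heb_dist_prox_grad_bound_small_theta {d : ℕ} (L c θ ξ : ℝ)
    (hL : 0 < L) (hc : 0 < c) (hθ : θ ∈ Set.Ioc (0:ℝ) (1/2))
    (f g : EuclideanSpace ℝ (Fin d) → ℝ)
    (f' : EuclideanSpace ℝ (Fin d) → EuclideanSpace ℝ (Fin d))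
    (hconvf : ConvexOn ℝ Set.univ f)
    (hgrad : ∀ x, HasGradientAt f (f' x) x)
    (hlip : ∀ x y, ‖f' x - f' y‖ ≤ L * ‖x - y‖)
    (hconvg : ConvexOn ℝ Set.univ g) (hlsc : LowerSemicontinuous g)
    (T : EuclideanSpace ℝ (Fin d) → EuclideanSpace ℝ (Fin d))
    (hT : ∀ x z, 1 / 2 * ‖T x - (x - (1 / L) • f' x)‖ ^ 2 + (1 / L) * g (T x)
        ≤ 1 / 2 * ‖z - (x - (1 / L) • f' x)‖ ^ 2 + (1 / L) * g z)
    (Ω : Set (EuclideanSpace ℝ (Fin d)))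
    (hΩ : Ω = {z | ∀ y, f z + g z ≤ f y + g y}) (hne : Ω.Nonempty)
    (Fstar : ℝ) (hfs : ∀ z ∈ Ω, f z + g z = Fstar)
    (heb : ∀ x, f x + g x - Fstar ≤ ξ →
        Metric.infDist x Ω ≤ c * (f x + g x - Fstar) ^ θ)
    (x : EuclideanSpace ℝ (Fin d)) (hx : f x + g x - Fstar ≤ ξ) :
    Metric.infDist x Ω ≤ 2 / L * ‖L • (x - T x)‖
      + c ^ (1 / (1 - θ)) * (2:ℝ) ^ (θ / (1 - θ)) * ‖L • (x - T x)‖ ^ (θ / (1 - θ)) := by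
  obtain ⟨hθ0, hθhalf⟩ := hθ
  have h1θ : 0 < 1 - θ := by linarith
  set p := T x with hp
  set G := L • (x - p) with hG
  have hGnn : 0 ≤ ‖G‖ := norm_nonneg _
  have hGnorm : ‖G‖ = L * ‖x - p‖ := by
    rw [hG, norm_smul, Real.norm_eq_abs, abs_of_pos hL]
  -- closedness of Ω
  have hfcont : Continuous f := by
    rw [continuous_iff_continuousAt]
    exact fun z => ((hgrad z).differentiableAt).continuousAt
  have hFlsc : LowerSemicontinuous (fun z => f z + g z) :=
    (hfcont.lowerSemicontinuous).add hlsc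
  have hΩc : IsClosed Ω := by
    rw [hΩ]
    have hset : {z : EuclideanSpace ℝ (Fin d) | ∀ y, f z + g z ≤ f y + g y}
        = ⋂ y, {z | f z + g z ≤ f y + g y} := by
      ext z; simp [Set.mem_iInter]
    rw [hset]
    exact isClosed_iInter fun y => hFlsc.isClosed_preimage (f y + g y)
  -- prox subgradient
  set v := x - (1 / L) • f' x with hv
  have hsub : ∀ z, g p - g z ≤ inner ℝ (L • (v - p)) (p - z) :=
    prox_subgrad_aux L hL g hconvg v p (fun z => hT x z)
  have hvp : L • (v - p) = G - f' x := by
    have hinv : L * (1 / L) = 1 := by field_simp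
    rw [hv, hG]
    rw [show x - (1 / L) • f' x - p = (x - p) - (1 / L) • f' x by abel]
    rw [smul_sub, smul_smul, hinv, one_smul]
  -- descent: F p ≤ F x
  have hgdec : g p + inner ℝ (p - x) (f' x) + L / 2 * ‖p - x‖ ^ 2 ≤ g x := by
    have h := hT x x
    have e1 : p - (x - (1 / L) • f' x) = (p - x) + (1 / L) • f' x := by abel
    have e2 : x - (x - (1 / L) • f' x) = (1 / L) • f' x := by abel
    rw [e1, e2, norm_add_sq_real, real_inner_smul_right] at h
    have hq : 1 / 2 * ‖p - x‖ ^ 2 + (1 / L) * inner ℝ (p - x) (f' x) + (1 / L) * g p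
        ≤ (1 / L) * g x := by linarith [h]
    have hqL := mul_le_mul_of_nonneg_left hq (le_of_lt hL)
    have hL0 : L ≠ 0 := ne_of_gt hL
    have h1 : L * (1 / L * (inner ℝ (p - x) (f' x) : ℝ)) = inner ℝ (p - x) (f' x) := by
      field_simp
    have h2 : L * (1 / L * g p) = g p := by field_simp
    have h3 : L * (1 / L * g x) = g x := by field_simp
    linarith [hqL, h1, h2, h3]
  have hFdec : f p + g p ≤ f x + g x := by
    have hdesc := descent_lemma_aux L f f' hgrad hlip x p
    have hic : (inner ℝ (f' x) (p - x) : ℝ) = inner ℝ (p - x) (f' x) := real_inner_comm _ _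
    linarith [hdesc, hgdec]
  -- Fstar is a lower bound
  obtain ⟨z0, hz0⟩ := hne
  have hz0' := hz0
  rw [hΩ] at hz0'
  have hmin : ∀ y, Fstar ≤ f y + g y := by
    intro y
    have h := hz0' y
    rw [hfs z0 hz0] at h
    exact h
  have hFp0 : 0 ≤ f p + g p - Fstar := by linarith [hmin p]
  have hFpξ : f p + g p - Fstar ≤ ξ := by linarith [hFdec]
  -- nearest point
  set D := Metric.infDist p Ω with hD
  have hD0 : 0 ≤ D := Metric.infDist_nonneg
  obtain ⟨w, hwΩ, hwd⟩ := hΩc.exists_infDist_eq_dist ⟨z0, hz0⟩ p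
  have hDw : D = ‖p - w‖ := by rw [hD, hwd, dist_eq_norm]
  -- F p - Fstar ≤ 2‖G‖ D
  have hcg := convex_grad_ineq_aux f f' hconvf hgrad p w
  have hneg : (inner ℝ (f' p) (w - p) : ℝ) = - inner ℝ (f' p) (p - w) := by
    rw [show (w - p : EuclideanSpace ℝ (Fin d)) = -(p - w) by abel, inner_neg_right]
  have hfp : f p - f w ≤ inner ℝ (f' p) (p - w) := by rw [hneg] at hcg; linarith
  have hgp : g p - g w ≤ inner ℝ (G - f' x) (p - w) := by
    have h := hsub w; rwa [hvp] at h
  have hFpbound : f p + g p - Fstar ≤ 2 * ‖G‖ * D := by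
    have hadd : (inner ℝ (f' p) (p - w) : ℝ) + inner ℝ (G - f' x) (p - w)
        = inner ℝ (f' p - f' x + G) (p - w) := by
      rw [← inner_add_left]; congr 1; abel
    have hsum : f p + g p - (f w + g w) ≤ inner ℝ (f' p - f' x + G) (p - w) := by
      linarith [hfp, hgp, hadd.le, hadd.ge]
    have hcs : (inner ℝ (f' p - f' x + G) (p - w) : ℝ) ≤ ‖f' p - f' x + G‖ * ‖p - w‖ :=
      real_inner_le_norm _ _
    have hnb : ‖f' p - f' x + G‖ ≤ 2 * ‖G‖ := by
      calc ‖f' p - f' x + G‖ ≤ ‖f' p - f' x‖ + ‖G‖ := norm_add_le _ _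
      _ ≤ L * ‖p - x‖ + ‖G‖ := by linarith [hlip p x]
      _ = 2 * ‖G‖ := by rw [hGnorm, norm_sub_rev x p]; ring
    rw [hfs w hwΩ] at hsum
    calc f p + g p - Fstar ≤ inner ℝ (f' p - f' x + G) (p - w) := hsum
    _ ≤ ‖f' p - f' x + G‖ * ‖p - w‖ := hcs
    _ ≤ 2 * ‖G‖ * D := by
        rw [hDw]; exact mul_le_mul_of_nonneg_right hnb (norm_nonneg _)
  -- HEB at p
  have hheb := heb p hFpξ
  have hDb : D ≤ c * (2 * ‖G‖ * D) ^ θ := by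
    refine le_trans hheb (mul_le_mul_of_nonneg_left ?_ (le_of_lt hc))
    exact Real.rpow_le_rpow hFp0 hFpbound (le_of_lt hθ0)
  -- triangle
  have htri : Metric.infDist x Ω ≤ D + dist x p := Metric.infDist_le_infDist_add_dist
  have hxp : dist x p = ‖G‖ / L := by
    rw [dist_eq_norm, hGnorm]; field_simp
  have h2L : ‖G‖ / L ≤ 2 / L * ‖G‖ := by
    rw [show 2 / L * ‖G‖ = 2 * ‖G‖ / L by ring]
    gcongr
    linarith [hGnn]
  rcases eq_or_lt_of_le hD0 with hD0' | hDpos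
  · have hterm : 0 ≤ c ^ (1 / (1 - θ)) * (2:ℝ) ^ (θ / (1 - θ)) * ‖G‖ ^ (θ / (1 - θ)) := by
      positivity
    rw [← hD0'] at htri
    rw [hxp] at htri
    linarith [htri, h2L, hterm]
  · have hDθ : 0 < D ^ θ := Real.rpow_pos_of_pos hDpos θ
    have h2G : (2 * ‖G‖ * D) ^ θ = 2 ^ θ * ‖G‖ ^ θ * D ^ θ := by
      rw [Real.mul_rpow (by positivity) (le_of_lt hDpos),
        Real.mul_rpow (by norm_num) hGnn]
    have hstep : D ^ (1 - θ) * D ^ θ ≤ (c * (2 ^ θ * ‖G‖ ^ θ)) * D ^ θ := by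
      rw [← Real.rpow_add hDpos]
      norm_num
      calc D ≤ c * (2 * ‖G‖ * D) ^ θ := hDb
      _ = c * (2 ^ θ * ‖G‖ ^ θ) * D ^ θ := by rw [h2G]; ring
    have hkey : D ^ (1 - θ) ≤ c * (2 ^ θ * ‖G‖ ^ θ) := le_of_mul_le_mul_right hstep hDθ
    have hfin : D ≤ c ^ (1 / (1 - θ)) * (2:ℝ) ^ (θ / (1 - θ)) * ‖G‖ ^ (θ / (1 - θ)) := by
      have e0 : D = (D ^ (1 - θ)) ^ (1 / (1 - θ)) := by
        rw [← Real.rpow_mul (le_of_lt hDpos), mul_one_div_cancel (ne_of_gt h1θ),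
          Real.rpow_one]
      rw [e0]
      calc (D ^ (1 - θ)) ^ (1 / (1 - θ)) ≤ (c * (2 ^ θ * ‖G‖ ^ θ)) ^ (1 / (1 - θ)) :=
        Real.rpow_le_rpow (Real.rpow_nonneg (le_of_lt hDpos) _) hkey (by positivity)
      _ = c ^ (1 / (1 - θ)) * (2:ℝ) ^ (θ / (1 - θ)) * ‖G‖ ^ (θ / (1 - θ)) := by
          rw [Real.mul_rpow (le_of_lt hc) (by positivity),
            Real.mul_rpow (by positivity) (by positivity),
            ← Real.rpow_mul (by norm_num : (0:ℝ) ≤ 2), ← Real.rpow_mul hGnn,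
            mul_one_div, mul_assoc]
    rw [hxp] at htri
    linarith [htri, hfin, h2L]
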